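/- Let a₁, a₂, a₃ be positive integers with gcd(a₁, a₂, a₃) = 1, let S be the numerical semigroup they generate, and let f(S;X) = ∑_{m ∈ S} X^m. Then there exist (not necessarily distinct) non-negative integers p₁, p₂, p₃, p₄, p₅ such that (1 − X^{a₁})(1 − X^{a₂})(1 − X^{a₃})·f(S;X) = 1 − X^{p₁} − X^{p₂} − X^{p₃} + X^{p₄} + X^{p₅} in ℤ[[X]]. -/

import Mathlib

namespace NS3

open scoped Classical

/-- membership in the numerical semigroup generated by a₁,a₂,a₃ -/
def Sg (a₁ a₂ a₃ m : ℕ) : Prop := ∃ μ₁ μ₂ μ₃ : ℕ, m = μ₁ * a₁ + μ₂ * a₂ + μ₃ * a₃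

/-- the "staircase": (u,v) such that a₂u+a₃v is an Apéry element w.r.t. a₁ and
(u,v) is the representation with minimal u. -/
def Dn (a₁ a₂ a₃ u v : ℕ) : Prop :=
  (¬ ∃ s, Sg a₁ a₂ a₃ s ∧ a₂ * u + a₃ * v = a₁ + s) ∧
  ∀ u' < u, ∀ v' : ℕ, a₂ * u + a₃ * v ≠ a₂ * u' + a₃ * v'

variable {a₁ a₂ a₃ : ℕ}

lemma D_mono {u v u' v' : ℕ} (h : Dn a₁ a₂ a₃ u v) (hu : u' ≤ u) (hv : v' ≤ v) :
    Dn a₁ a₂ a₃ u' v' := by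
  obtain ⟨k, rfl⟩ := Nat.le.dest hu
  obtain ⟨l, rfl⟩ := Nat.le.dest hv
  constructor
  · rintro ⟨s, ⟨α, β, γ, rfl⟩, he⟩
    refine h.1 ⟨α * a₁ + β * a₂ + γ * a₃ + k * a₂ + l * a₃, ⟨α, β + k, γ + l, by ring⟩, ?_⟩
    calc a₂ * (u' + k) + a₃ * (v' + l) = (a₂ * u' + a₃ * v') + (k * a₂ + l * a₃) := by ring
      _ = a₁ + (α * a₁ + β * a₂ + γ * a₃) + (k * a₂ + l * a₃) := by rw [he]
      _ = a₁ + (α * a₁ + β * a₂ + γ * a₃ + k * a₂ + l * a₃) := by ring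
  · intro w hw v'' he
    refine h.2 (w + k) (by omega) (v'' + l) ?_
    calc a₂ * (u' + k) + a₃ * (v' + l) = (a₂ * u' + a₃ * v') + (a₂ * k + a₃ * l) := by ring
      _ = (a₂ * w + a₃ * v'') + (a₂ * k + a₃ * l) := by rw [he]
      _ = a₂ * (w + k) + a₃ * (v'' + l) := by ring

lemma D_zero_zero (h₁ : 0 < a₁) : Dn a₁ a₂ a₃ 0 0 := by
  constructor
  · rintro ⟨s, _, he⟩
    simp only [Nat.mul_zero, Nat.add_zero] at he
    omega
  · intro u' hu'; omega

lemma notD_row (h₂ : 0 < a₂) {u : ℕ} (hu : a₁ ≤ u) : ¬ Dn a₁ a₂ a₃ u 0 := by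
  intro hD
  obtain ⟨w, rfl⟩ := Nat.le.dest hu
  obtain ⟨t, rfl⟩ : ∃ t, a₂ = t + 1 := ⟨a₂ - 1, by omega⟩
  exact hD.1 ⟨t * a₁ + w * (t+1) + 0 * a₃, ⟨t, w, 0, rfl⟩, by ring⟩

lemma notD_col (h₃ : 0 < a₃) {v : ℕ} (hv : a₁ ≤ v) : ¬ Dn a₁ a₂ a₃ 0 v := by
  intro hD
  obtain ⟨w, rfl⟩ := Nat.le.dest hv
  obtain ⟨t, rfl⟩ : ∃ t, a₃ = t + 1 := ⟨a₃ - 1, by omega⟩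
  exact hD.1 ⟨t * a₁ + 0 * a₂ + w * (t+1), ⟨t, 0, w, rfl⟩, by ring⟩

/-- extraction of a minimal element of the complement of D below a given one -/
lemma exists_min : ∀ n u v, u + v ≤ n → ¬ Dn a₁ a₂ a₃ u v →
    ∃ p q, p ≤ u ∧ q ≤ v ∧ ¬ Dn a₁ a₂ a₃ p q ∧
      (p = 0 ∨ Dn a₁ a₂ a₃ (p-1) q) ∧ (q = 0 ∨ Dn a₁ a₂ a₃ p (q-1)) := by
  intro n
  induction n with
  | zero =>
    intro u v huv h
    have hu : u = 0 := by omega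
    have hv : v = 0 := by omega
    subst hu; subst hv
    exact ⟨0, 0, le_rfl, le_rfl, h, Or.inl rfl, Or.inl rfl⟩
  | succ n ih =>
    intro u v huv h
    by_cases h1 : u ≠ 0 ∧ ¬ Dn a₁ a₂ a₃ (u-1) v
    · obtain ⟨p, q, hp, hq, h3, h4, h5⟩ := ih (u-1) v (by omega) h1.2
      exact ⟨p, q, by omega, hq, h3, h4, h5⟩
    by_cases h2 : v ≠ 0 ∧ ¬ Dn a₁ a₂ a₃ u (v-1)
    · obtain ⟨p, q, hp, hq, h3, h4, h5⟩ := ih u (v-1) (by omega) h2.2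
      exact ⟨p, q, hp, by omega, h3, h4, h5⟩
    · push_neg at h1 h2
      refine ⟨u, v, le_rfl, le_rfl, h, ?_, ?_⟩
      · by_cases hu : u = 0
        · exact Or.inl hu
        · exact Or.inr (h1 hu)
      · by_cases hv : v = 0
        · exact Or.inl hv
        · exact Or.inr (h2 hv)

/-- an interior corner of the staircase corresponds to a multiple of a₁ -/
lemma gen_mul (h₂ : 0 < a₂) (h₃ : 0 < a₃) {p q : ℕ}
    (hpq : ¬ Dn a₁ a₂ a₃ (p+1) (q+1)) (hl : Dn a₁ a₂ a₃ p (q+1)) (hd : Dn a₁ a₂ a₃ (p+1) q) :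
    ∃ A, 0 < A ∧ a₂ * (p+1) + a₃ * (q+1) = A * a₁ := by
  -- the minimality condition cannot be the one failing
  have step1 : ∀ u' < p + 1, ∀ v' : ℕ, a₂ * (p+1) + a₃ * (q+1) ≠ a₂ * u' + a₃ * v' := by
    intro u' hu' v' he
    have hua : a₂ * u' ≤ a₂ * p := Nat.mul_le_mul_left _ (by omega)
    have hv' : q + 1 < v' := by
      by_contra hcon
      push_neg at hcon
      have hva : a₃ * v' ≤ a₃ * (q+1) := Nat.mul_le_mul_left _ hcon
      have : a₂ * (p+1) = a₂ * p + a₂ := by ring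
      omega
    obtain ⟨w, rfl⟩ : ∃ w, v' = w + 1 := ⟨v' - 1, by omega⟩
    have he' : a₂ * (p+1) + a₃ * q = a₂ * u' + a₃ * w := by
      have h1 : (a₂ * (p+1) + a₃ * q) + a₃ = (a₂ * u' + a₃ * w) + a₃ := by
        calc (a₂ * (p+1) + a₃ * q) + a₃ = a₂ * (p+1) + a₃ * (q+1) := by ring
          _ = a₂ * u' + a₃ * (w+1) := he
          _ = (a₂ * u' + a₃ * w) + a₃ := by ring
      omega
    exact hd.2 u' hu' w he'
  have hA : ∃ s, Sg a₁ a₂ a₃ s ∧ a₂ * (p+1) + a₃ * (q+1) = a₁ + s := by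
    by_contra hA
    exact hpq ⟨hA, step1⟩
  obtain ⟨s, ⟨α, β, γ, rfl⟩, he⟩ := hA
  -- β ≤ p
  have hβ : β ≤ p := by
    by_contra hcon
    push_neg at hcon
    obtain ⟨β', rfl⟩ : ∃ β', β = (p+1) + β' := ⟨β - (p+1), by omega⟩
    have he2 : a₃ * (q+1) = a₁ + (α * a₁ + β' * a₂ + γ * a₃) := by
      have h1 : a₂ * (p+1) + a₃ * (q+1) = a₂ * (p+1) + (a₁ + (α * a₁ + β' * a₂ + γ * a₃)) := by
        calc a₂ * (p+1) + a₃ * (q+1) = a₁ + (α * a₁ + ((p+1)+β') * a₂ + γ * a₃) := he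
          _ = a₂ * (p+1) + (a₁ + (α * a₁ + β' * a₂ + γ * a₃)) := by ring
      omega
    have hnD : ¬ Dn a₁ a₂ a₃ 0 (q+1) := by
      intro hD
      exact hD.1 ⟨α * a₁ + β' * a₂ + γ * a₃, ⟨α, β', γ, rfl⟩, by
        calc a₂ * 0 + a₃ * (q+1) = a₃ * (q+1) := by ring
          _ = a₁ + (α * a₁ + β' * a₂ + γ * a₃) := he2⟩
    exact hnD (D_mono hl (Nat.zero_le p) le_rfl)
  -- γ ≤ q
  have hγ : γ ≤ q := by
    by_contra hcon
    push_neg at hcon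
    obtain ⟨γ', rfl⟩ : ∃ γ', γ = (q+1) + γ' := ⟨γ - (q+1), by omega⟩
    have he2 : a₂ * (p+1) = a₁ + (α * a₁ + β * a₂ + γ' * a₃) := by
      have h1 : a₂ * (p+1) + a₃ * (q+1) = (a₁ + (α * a₁ + β * a₂ + γ' * a₃)) + a₃ * (q+1) := by
        calc a₂ * (p+1) + a₃ * (q+1) = a₁ + (α * a₁ + β * a₂ + ((q+1)+γ') * a₃) := he
          _ = (a₁ + (α * a₁ + β * a₂ + γ' * a₃)) + a₃ * (q+1) := by ring
      omega
    have hnD : ¬ Dn a₁ a₂ a₃ (p+1) 0 := by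
      intro hD
      exact hD.1 ⟨α * a₁ + β * a₂ + γ' * a₃, ⟨α, β, γ', rfl⟩, by
        calc a₂ * (p+1) + a₃ * 0 = a₂ * (p+1) := by ring
          _ = a₁ + (α * a₁ + β * a₂ + γ' * a₃) := he2⟩
    exact hnD (D_mono hd le_rfl (Nat.zero_le q))
  -- write p+1 = β + P, q+1 = γ + Q
  obtain ⟨P, hP⟩ : ∃ P, p + 1 = β + P := ⟨p + 1 - β, by omega⟩
  obtain ⟨Q, hQ⟩ : ∃ Q, q + 1 = γ + Q := ⟨q + 1 - γ, by omega⟩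
  have hP1 : 1 ≤ P := by omega
  have hQ1 : 1 ≤ Q := by omega
  have heP : a₂ * P + a₃ * Q = (α + 1) * a₁ := by
    have h1 : (a₂ * P + a₃ * Q) + (β * a₂ + γ * a₃) = ((α+1) * a₁) + (β * a₂ + γ * a₃) := by
      calc (a₂ * P + a₃ * Q) + (β * a₂ + γ * a₃) = a₂ * (β + P) + a₃ * (γ + Q) := by ring
        _ = a₂ * (p+1) + a₃ * (q+1) := by rw [← hP, ← hQ]
        _ = a₁ + (α * a₁ + β * a₂ + γ * a₃) := he
        _ = ((α+1) * a₁) + (β * a₂ + γ * a₃) := by ring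
    omega
  have hnD : ¬ Dn a₁ a₂ a₃ P Q := by
    intro hD
    exact hD.1 ⟨α * a₁, ⟨α, 0, 0, by ring⟩, by rw [heP]; ring⟩
  have hβ0 : β = 0 := by
    by_contra hcon
    exact hnD (D_mono hl (by omega) (by omega))
  have hγ0 : γ = 0 := by
    by_contra hcon
    exact hnD (D_mono hd (by omega) (by omega))
  refine ⟨α + 1, by omega, ?_⟩
  have : P = p + 1 := by omega
  have : Q = q + 1 := by omega
  rw [show p + 1 = P by omega, show q + 1 = Q by omega]
  exact heP

/-- there cannot be two distinct interior corners (ordered case) -/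
lemma gen_unique_lt (h₂ : 0 < a₂) (h₃ : 0 < a₃) {p q p' q' : ℕ}
    (hpq : ¬ Dn a₁ a₂ a₃ (p+1) (q+1)) (hl : Dn a₁ a₂ a₃ p (q+1)) (hd : Dn a₁ a₂ a₃ (p+1) q)
    (hpq' : ¬ Dn a₁ a₂ a₃ (p'+1) (q'+1)) (hl' : Dn a₁ a₂ a₃ p' (q'+1))
    (hd' : Dn a₁ a₂ a₃ (p'+1) q') (hlt : p < p') : False := by
  have hq' : q' < q := by
    by_contra hcon
    push_neg at hcon
    exact hpq (D_mono hl' (by omega) (by omega))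
  obtain ⟨A, hA0, hA⟩ := gen_mul h₂ h₃ hpq hl hd
  obtain ⟨A', hA0', hA'⟩ := gen_mul h₂ h₃ hpq' hl' hd'
  obtain ⟨k, rfl⟩ : ∃ k, p' = p + k := ⟨p' - p, by omega⟩
  have hk1 : 1 ≤ k := by omega
  obtain ⟨l, rfl⟩ : ∃ l, q = q' + l := ⟨q - q', by omega⟩
  have hl1 : 1 ≤ l := by omega
  -- key combined equation
  have key : A * a₁ + a₂ * k = A' * a₁ + a₃ * l := by
    calc A * a₁ + a₂ * k = (a₂ * (p+1) + a₃ * (q'+l+1)) + a₂ * k := by rw [← hA]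
      _ = (a₂ * (p+k+1) + a₃ * (q'+1)) + a₃ * l := by ring
      _ = A' * a₁ + a₃ * l := by rw [hA']
  rcases lt_trichotomy A A' with hc | hc | hc
  · -- A < A' : a₂ * k = (A'-A) * a₁ + a₃ * l, contradiction with Dn k 0
    obtain ⟨B, rfl⟩ : ∃ B, A' = A + (B+1) := ⟨A' - A - 1, by omega⟩
    have hk : a₂ * k = a₁ + (B * a₁ + 0 * a₂ + l * a₃) := by
      have : a₂ * k = (B+1) * a₁ + a₃ * l := by
        have h1 : A * a₁ + a₂ * k = A * a₁ + ((B+1) * a₁ + a₃ * l) := by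
          calc A * a₁ + a₂ * k = (A + (B+1)) * a₁ + a₃ * l := key
            _ = A * a₁ + ((B+1) * a₁ + a₃ * l) := by ring
        omega
      rw [this]; ring
    have hnD : ¬ Dn a₁ a₂ a₃ k 0 := by
      intro hD
      exact hD.1 ⟨B * a₁ + 0 * a₂ + l * a₃, ⟨B, 0, l, rfl⟩, by
        calc a₂ * k + a₃ * 0 = a₂ * k := by ring
          _ = a₁ + (B * a₁ + 0 * a₂ + l * a₃) := hk⟩
    exact hnD (D_mono hd' (by omega) (Nat.zero_le q'))
  · -- A = A' : the two corners have the same value, contradicting minimality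
    subst hc
    have hval : a₂ * (p+k+1) + a₃ * q' = a₂ * (p+1) + a₃ * (q'+l) := by
      have h1 : (a₂ * (p+k+1) + a₃ * q') + a₃ = (a₂ * (p+1) + a₃ * (q'+l)) + a₃ := by
        calc (a₂ * (p+k+1) + a₃ * q') + a₃ = a₂ * (p+k+1) + a₃ * (q'+1) := by ring
          _ = A * a₁ := hA'
          _ = a₂ * (p+1) + a₃ * (q'+l+1) := by rw [hA]
          _ = (a₂ * (p+1) + a₃ * (q'+l)) + a₃ := by ring
      omega
    exact hd'.2 (p+1) (by omega) (q'+l) hval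
  · -- A' < A : a₃ * l = (A-A') * a₁ + a₂ * k, contradiction with Dn 0 l
    obtain ⟨B, rfl⟩ : ∃ B, A = A' + (B+1) := ⟨A - A' - 1, by omega⟩
    have hk : a₃ * l = a₁ + (B * a₁ + k * a₂ + 0 * a₃) := by
      have : a₃ * l = (B+1) * a₁ + a₂ * k := by
        have h1 : A' * a₁ + ((B+1) * a₁ + a₂ * k) = A' * a₁ + a₃ * l := by
          calc A' * a₁ + ((B+1) * a₁ + a₂ * k) = (A' + (B+1)) * a₁ + a₂ * k := by ring
            _ = A' * a₁ + a₃ * l := key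
        omega
      rw [this]; ring
    have hnD : ¬ Dn a₁ a₂ a₃ 0 l := by
      intro hD
      exact hD.1 ⟨B * a₁ + k * a₂ + 0 * a₃, ⟨B, k, 0, rfl⟩, by
        calc a₂ * 0 + a₃ * l = a₃ * l := by ring
          _ = a₁ + (B * a₁ + k * a₂ + 0 * a₃) := hk⟩
    exact hnD (D_mono hl (Nat.zero_le p) (by omega))

lemma gen_unique (h₂ : 0 < a₂) (h₃ : 0 < a₃) {p q p' q' : ℕ}
    (hpq : ¬ Dn a₁ a₂ a₃ (p+1) (q+1)) (hl : Dn a₁ a₂ a₃ p (q+1)) (hd : Dn a₁ a₂ a₃ (p+1) q)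
    (hpq' : ¬ Dn a₁ a₂ a₃ (p'+1) (q'+1)) (hl' : Dn a₁ a₂ a₃ p' (q'+1))
    (hd' : Dn a₁ a₂ a₃ (p'+1) q') : p = p' ∧ q = q' := by
  rcases lt_trichotomy p p' with hc | hc | hc
  · exact absurd (gen_unique_lt h₂ h₃ hpq hl hd hpq' hl' hd' hc) (by simp)
  · subst hc
    refine ⟨rfl, ?_⟩
    rcases lt_trichotomy q q' with hq | hq | hq
    · exact absurd (hpq (D_mono hd' le_rfl (by omega))) (by simp)
    · exact hq
    · exact absurd (hpq' (D_mono hd le_rfl (by omega))) (by simp)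
  · exact absurd (gen_unique_lt h₂ h₃ hpq' hl' hd' hpq hl hd hc) (by simp)


/-- The staircase is a rectangle or an L-shape. -/
lemma struct (h₁ : 0 < a₁) (h₂ : 0 < a₂) (h₃ : 0 < a₃) :
    ∃ c b : ℕ, 0 < c ∧ 0 < b ∧
      ((∀ u v, Dn a₁ a₂ a₃ u v ↔ (u < c ∧ v < b)) ∨
       ∃ e d, 0 < e ∧ e < c ∧ 0 < d ∧ d < b ∧
         (∀ u v, Dn a₁ a₂ a₃ u v ↔ (u < c ∧ v < b ∧ ¬(e ≤ u ∧ d ≤ v)))) := by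
  have hexc : ∃ u, ¬ Dn a₁ a₂ a₃ u 0 := ⟨a₁, notD_row h₂ le_rfl⟩
  have hexb : ∃ v, ¬ Dn a₁ a₂ a₃ 0 v := ⟨a₁, notD_col h₃ le_rfl⟩
  set c := Nat.find hexc with hc_def
  set b := Nat.find hexb with hb_def
  have hc : ¬ Dn a₁ a₂ a₃ c 0 := Nat.find_spec hexc
  have hb : ¬ Dn a₁ a₂ a₃ 0 b := Nat.find_spec hexb
  have hcmin : ∀ u < c, Dn a₁ a₂ a₃ u 0 := fun u hu => by
    by_contra hcon; exact Nat.find_min hexc hu hcon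
  have hbmin : ∀ v < b, Dn a₁ a₂ a₃ 0 v := fun v hv => by
    by_contra hcon; exact Nat.find_min hexb hv hcon
  have hc0 : 0 < c := by
    rcases Nat.eq_zero_or_pos c with h | h
    · exact absurd (h ▸ hc) (by simp [D_zero_zero h₁])
    · exact h
  have hb0 : 0 < b := by
    rcases Nat.eq_zero_or_pos b with h | h
    · exact absurd (h ▸ hb) (by simp [D_zero_zero h₁])
    · exact h
  have hDsub : ∀ u v, Dn a₁ a₂ a₃ u v → u < c ∧ v < b := by
    intro u v hD
    constructor
    · by_contra hcon; push_neg at hcon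
      exact hc (D_mono hD hcon (Nat.zero_le v))
    · by_contra hcon; push_neg at hcon
      exact hb (D_mono hD (Nat.zero_le u) hcon)
  refine ⟨c, b, hc0, hb0, ?_⟩
  by_cases hI : ∃ p q, ¬ Dn a₁ a₂ a₃ (p+1) (q+1) ∧ Dn a₁ a₂ a₃ p (q+1) ∧ Dn a₁ a₂ a₃ (p+1) q
  · obtain ⟨p, q, hpq, hl, hd⟩ := hI
    have hec : p + 1 < c := (hDsub _ _ hd).1
    have hdb : q + 1 < b := (hDsub _ _ hl).2
    refine Or.inr ⟨p+1, q+1, by omega, hec, by omega, hdb, ?_⟩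
    intro u v
    constructor
    · intro hD
      refine ⟨(hDsub _ _ hD).1, (hDsub _ _ hD).2, ?_⟩
      rintro ⟨h1, h2⟩
      exact hpq (D_mono hD h1 h2)
    · rintro ⟨hu, hv, hL⟩
      by_contra hnD
      obtain ⟨P, Q, hPu, hQv, hnDPQ, hflag1, hflag2⟩ := exists_min (u+v) u v le_rfl hnD
      rcases hflag1 with hP0 | hDl
      · subst hP0
        exact hnDPQ (hbmin Q (by omega))
      rcases hflag2 with hQ0 | hDd
      · subst hQ0
        exact hnDPQ (hcmin P (by omega))
      have hP1 : 1 ≤ P := by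
        rcases Nat.eq_zero_or_pos P with h | h
        · exact absurd (hbmin Q (by omega)) (h ▸ hnDPQ)
        · exact h
      have hQ1 : 1 ≤ Q := by
        rcases Nat.eq_zero_or_pos Q with h | h
        · exact absurd (hcmin P (by omega)) (h ▸ hnDPQ)
        · exact h
      obtain ⟨P', rfl⟩ : ∃ P', P = P' + 1 := ⟨P - 1, by omega⟩
      obtain ⟨Q', rfl⟩ : ∃ Q', Q = Q' + 1 := ⟨Q - 1, by omega⟩
      simp only [Nat.add_sub_cancel] at hDl hDd
      obtain ⟨hPp, hQq⟩ := gen_unique h₂ h₃ hnDPQ hDl hDd hpq hl hd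
      exact hL ⟨by omega, by omega⟩
  · refine Or.inl ?_
    intro u v
    constructor
    · exact hDsub u v
    · rintro ⟨hu, hv⟩
      by_contra hnD
      obtain ⟨P, Q, hPu, hQv, hnDPQ, hflag1, hflag2⟩ := exists_min (u+v) u v le_rfl hnD
      rcases hflag1 with hP0 | hDl
      · subst hP0
        exact hnDPQ (hbmin Q (by omega))
      rcases hflag2 with hQ0 | hDd
      · subst hQ0
        exact hnDPQ (hcmin P (by omega))
      have hP1 : 1 ≤ P := by
        rcases Nat.eq_zero_or_pos P with h | h
        · exact absurd (hbmin Q (by omega)) (h ▸ hnDPQ)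
        · exact h
      have hQ1 : 1 ≤ Q := by
        rcases Nat.eq_zero_or_pos Q with h | h
        · exact absurd (hcmin P (by omega)) (h ▸ hnDPQ)
        · exact h
      obtain ⟨P', rfl⟩ : ∃ P', P = P' + 1 := ⟨P - 1, by omega⟩
      obtain ⟨Q', rfl⟩ : ∃ Q', Q = Q' + 1 := ⟨Q - 1, by omega⟩
      simp only [Nat.add_sub_cancel] at hDl hDd
      exact hI ⟨P', Q', hnDPQ, hDl, hDd⟩


open PowerSeries in
lemma one_sub_mul_geom {R : Type*} [CommRing R] (x : R) (N : ℕ) :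
    (1 - x) * ∑ i ∈ Finset.range N, x ^ i = 1 - x ^ N := by
  have h := geom_sum_mul x N
  linear_combination -h

open PowerSeries in
lemma geom_block (n N : ℕ) :
    (1 - (X : PowerSeries ℤ) ^ n) * ∑ i ∈ Finset.range N, ((X : PowerSeries ℤ) ^ n) ^ i
      = 1 - (X : PowerSeries ℤ) ^ (n * N) := by
  rw [one_sub_mul_geom, pow_mul]

open PowerSeries in
lemma prod_block (a₂ a₃ : ℕ) (s t : Finset ℕ) :
    ∑ p ∈ s ×ˢ t, (X : PowerSeries ℤ) ^ (a₂ * p.1 + a₃ * p.2)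
      = (∑ i ∈ s, ((X : PowerSeries ℤ) ^ a₂) ^ i) * ∑ j ∈ t, ((X : PowerSeries ℤ) ^ a₃) ^ j := by
  rw [Finset.sum_mul_sum, Finset.sum_product]
  simp only [pow_add, pow_mul]

open PowerSeries in
lemma apery_sum (h₁ : 0 < a₁) (h₂ : 0 < a₂) (h₃ : 0 < a₃)
    (f : PowerSeries ℤ)
    (hf : ∀ m : ℕ, PowerSeries.coeff m f = if Sg a₁ a₂ a₃ m then 1 else 0)
    (T : Finset (ℕ × ℕ))
    (hT : ∀ u v : ℕ, Dn a₁ a₂ a₃ u v ↔ (u, v) ∈ T) :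
    f * (1 - (X : PowerSeries ℤ) ^ a₁) = ∑ p ∈ T, (X : PowerSeries ℤ) ^ (a₂ * p.1 + a₃ * p.2) := by
  -- the image characterization
  have hE : ∀ m : ℕ, (∃ p ∈ T, a₂ * p.1 + a₃ * p.2 = m) ↔
      (Sg a₁ a₂ a₃ m ∧ ¬ ∃ s, Sg a₁ a₂ a₃ s ∧ m = a₁ + s) := by
    intro m
    constructor
    · rintro ⟨⟨u, v⟩, hmem, rfl⟩
      have hD := (hT u v).mpr hmem
      refine ⟨⟨0, u, v, by ring⟩, ?_⟩
      rintro ⟨s, hs, he⟩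
      exact hD.1 ⟨s, hs, he⟩
    · rintro ⟨⟨μ₁, μ₂, μ₃, rfl⟩, hap⟩
      have hμ₁ : μ₁ = 0 := by
        by_contra hcon
        obtain ⟨t, rfl⟩ : ∃ t, μ₁ = t + 1 := ⟨μ₁ - 1, by omega⟩
        exact hap ⟨t * a₁ + μ₂ * a₂ + μ₃ * a₃, ⟨t, μ₂, μ₃, rfl⟩, by ring⟩
      subst hμ₁
      have hm : ∃ u, ∃ v, 0 * a₁ + μ₂ * a₂ + μ₃ * a₃ = a₂ * u + a₃ * v := ⟨μ₂, μ₃, by ring⟩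
      set u₀ := Nat.find hm with hu₀
      obtain ⟨v₀, hm₀⟩ := Nat.find_spec hm
      have hD : Dn a₁ a₂ a₃ u₀ v₀ := by
        constructor
        · rintro ⟨s, hs, he⟩
          exact hap ⟨s, hs, by rw [hm₀]; exact he⟩
        · intro u' hu' v' he
          exact Nat.find_min hm hu' ⟨v', by rw [hm₀, he]⟩
      exact ⟨(u₀, v₀), (hT u₀ v₀).mp hD, hm₀.symm⟩
  -- injectivity
  have hinj : ∀ p ∈ T, ∀ r ∈ T, a₂ * p.1 + a₃ * p.2 = a₂ * r.1 + a₃ * r.2 → p = r := by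
    rintro ⟨u, v⟩ hmem ⟨u', v'⟩ hmem' he
    have hD := (hT u v).mpr hmem
    have hD' := (hT u' v').mpr hmem'
    simp only at he
    rcases lt_trichotomy u u' with hc | hc | hc
    · exact absurd (hD'.2 u hc v he.symm) (by simp)
    · subst hc
      have : a₃ * v = a₃ * v' := by omega
      have : v = v' := Nat.eq_of_mul_eq_mul_left h₃ this
      simp [this]
    · exact absurd (hD.2 u' hc v' he) (by simp)
  -- coefficientwise equality
  ext d
  have hL : (PowerSeries.coeff d) (f * (1 - (X : PowerSeries ℤ) ^ a₁))
      = (if Sg a₁ a₂ a₃ d then 1 else 0)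
        - (if a₁ ≤ d then (if Sg a₁ a₂ a₃ (d - a₁) then (1:ℤ) else 0) else 0) := by
    rw [mul_sub, mul_one, map_sub, PowerSeries.coeff_mul_X_pow', hf]
    by_cases h : a₁ ≤ d
    · rw [if_pos h, if_pos h, hf]
    · rw [if_neg h, if_neg h]
  rw [hL, map_sum]
  simp only [PowerSeries.coeff_X_pow]
  by_cases hd : ∃ p ∈ T, a₂ * p.1 + a₃ * p.2 = d
  · -- RHS sum is 1
    obtain ⟨p₀, hp₀, hval⟩ := hd
    have hsum : (∑ p ∈ T, if d = a₂ * p.1 + a₃ * p.2 then (1:ℤ) else 0) = 1 := by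
      rw [Finset.sum_eq_single_of_mem p₀ hp₀]
      · rw [if_pos hval.symm]
      · intro r hr hne
        rw [if_neg]
        intro hcon
        exact hne (hinj r hr p₀ hp₀ (by omega))
    rw [hsum]
    have hap := (hE d).mp ⟨p₀, hp₀, hval⟩
    rw [if_pos hap.1]
    by_cases h : a₁ ≤ d
    · rw [if_pos h, if_neg]
      · ring
      · intro hcon
        obtain ⟨w, rfl⟩ := Nat.le.dest h
        simp only [Nat.add_sub_cancel_left] at hcon
        exact hap.2 ⟨w, hcon, rfl⟩
    · rw [if_neg h]; ring
  · -- RHS sum is 0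
    have hsum : (∑ p ∈ T, if d = a₂ * p.1 + a₃ * p.2 then (1:ℤ) else 0) = 0 := by
      apply Finset.sum_eq_zero
      intro r hr
      rw [if_neg]
      intro hcon
      exact hd ⟨r, hr, hcon.symm⟩
    rw [hsum]
    have hnap := (hE d).not.mp hd
    by_cases hS : Sg a₁ a₂ a₃ d
    · -- then d must be of the form a₁ + s with s ∈ S
      have : ∃ s, Sg a₁ a₂ a₃ s ∧ d = a₁ + s := by
        by_contra hcon
        exact hnap ⟨hS, hcon⟩
      obtain ⟨s, hs, rfl⟩ := this
      rw [if_pos hS, if_pos (by omega : a₁ ≤ a₁ + s), if_pos (by simpa using hs)]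
      ring
    · rw [if_neg hS]
      by_cases h : a₁ ≤ d
      · rw [if_pos h, if_neg]
        · ring
        · intro hcon
          obtain ⟨w, rfl⟩ := Nat.le.dest h
          simp only [Nat.add_sub_cancel_left] at hcon
          obtain ⟨α, β, γ, rfl⟩ := hcon
          exact hS ⟨α + 1, β, γ, by ring⟩
      · rw [if_neg h]; ring


end NS3


open scoped Classical in
theorem stmt_1 (a₁ a₂ a₃ : ℕ) (h₁ : 0 < a₁) (h₂ : 0 < a₂) (h₃ : 0 < a₃)
    (hgcd : Nat.gcd a₁ (Nat.gcd a₂ a₃) = 1)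
    (f : PowerSeries ℤ)
    (hf : ∀ m : ℕ, PowerSeries.coeff m f =
      if ∃ μ₁ μ₂ μ₃ : ℕ, m = μ₁ * a₁ + μ₂ * a₂ + μ₃ * a₃ then 1 else 0) :
    ∃ p₁ p₂ p₃ p₄ p₅ : ℕ,
      (1 - PowerSeries.X ^ a₁) * (1 - PowerSeries.X ^ a₂) * (1 - PowerSeries.X ^ a₃) * f
        = 1 - PowerSeries.X ^ p₁ - PowerSeries.X ^ p₂ - PowerSeries.X ^ p₃
            + PowerSeries.X ^ p₄ + PowerSeries.X ^ p₅ := by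
  have hf' : ∀ m : ℕ, PowerSeries.coeff m f = if NS3.Sg a₁ a₂ a₃ m then 1 else 0 := hf
  obtain ⟨c, b, hc0, hb0, hcase⟩ := NS3.struct h₁ h₂ h₃ (a₂ := a₂) (a₃ := a₃)
  set X : PowerSeries ℤ := PowerSeries.X
  rcases hcase with hD | ⟨e, d, he0, hec, hd0, hdb, hD⟩
  · -- rectangle case
    set T : Finset (ℕ × ℕ) := Finset.range c ×ˢ Finset.range b with hT_def
    have hT : ∀ u v : ℕ, NS3.Dn a₁ a₂ a₃ u v ↔ (u, v) ∈ T := by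
      intro u v
      rw [hD u v]
      simp [hT_def, Finset.mem_product]
    have hfA := NS3.apery_sum h₁ h₂ h₃ f hf' T hT
    refine ⟨a₂ * c, a₃ * b, 0, a₂ * c + a₃ * b, 0, ?_⟩
    calc (1 - X ^ a₁) * (1 - X ^ a₂) * (1 - X ^ a₃) * f
        = (1 - X ^ a₂) * (1 - X ^ a₃) * (f * (1 - X ^ a₁)) := by ring
      _ = (1 - X ^ a₂) * (1 - X ^ a₃) *
            ((∑ i ∈ Finset.range c, (X ^ a₂) ^ i) * ∑ j ∈ Finset.range b, (X ^ a₃) ^ j) := by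
          rw [hfA, hT_def, NS3.prod_block]
      _ = ((1 - X ^ a₂) * ∑ i ∈ Finset.range c, (X ^ a₂) ^ i) *
            ((1 - X ^ a₃) * ∑ j ∈ Finset.range b, (X ^ a₃) ^ j) := by ring
      _ = (1 - X ^ (a₂ * c)) * (1 - X ^ (a₃ * b)) := by
          rw [NS3.geom_block, NS3.geom_block]
      _ = 1 - X ^ (a₂ * c) - X ^ (a₃ * b) - X ^ 0 + X ^ (a₂ * c + a₃ * b) + X ^ 0 := by
          rw [pow_zero]; ring
  · -- L-shape case
    set T : Finset (ℕ × ℕ) :=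
      (Finset.range c ×ˢ Finset.range b) \ (Finset.Ico e c ×ˢ Finset.Ico d b) with hT_def
    have hT : ∀ u v : ℕ, NS3.Dn a₁ a₂ a₃ u v ↔ (u, v) ∈ T := by
      intro u v
      rw [hD u v]
      simp only [hT_def, Finset.mem_sdiff, Finset.mem_product, Finset.mem_range, Finset.mem_Ico]
      omega
    have hfA := NS3.apery_sum h₁ h₂ h₃ f hf' T hT
    have hsub : Finset.Ico e c ×ˢ Finset.Ico d b ⊆ Finset.range c ×ˢ Finset.range b := by
      apply Finset.product_subset_product <;>
        · rw [Finset.range_eq_Ico]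
          exact Finset.Ico_subset_Ico (Nat.zero_le _) le_rfl
    have hsplit : (∑ p ∈ T, X ^ (a₂ * p.1 + a₃ * p.2))
        = (∑ i ∈ Finset.range c, (X ^ a₂) ^ i) * (∑ j ∈ Finset.range b, (X ^ a₃) ^ j)
          - (∑ i ∈ Finset.Ico e c, (X ^ a₂) ^ i) * (∑ j ∈ Finset.Ico d b, (X ^ a₃) ^ j) := by
      rw [hT_def, Finset.sum_sdiff_eq_sub hsub, NS3.prod_block, NS3.prod_block]
    have hIco₂ : (1 - X ^ a₂) * ∑ i ∈ Finset.Ico e c, (X ^ a₂) ^ i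
        = X ^ (a₂ * e) - X ^ (a₂ * c) := by
      rw [Finset.sum_Ico_eq_sub _ (le_of_lt hec), mul_sub, NS3.geom_block, NS3.geom_block]
      ring
    have hIco₃ : (1 - X ^ a₃) * ∑ j ∈ Finset.Ico d b, (X ^ a₃) ^ j
        = X ^ (a₃ * d) - X ^ (a₃ * b) := by
      rw [Finset.sum_Ico_eq_sub _ (le_of_lt hdb), mul_sub, NS3.geom_block, NS3.geom_block]
      ring
    refine ⟨a₂ * c, a₃ * b, a₂ * e + a₃ * d, a₂ * c + a₃ * d, a₂ * e + a₃ * b, ?_⟩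
    calc (1 - X ^ a₁) * (1 - X ^ a₂) * (1 - X ^ a₃) * f
        = (1 - X ^ a₂) * (1 - X ^ a₃) * (f * (1 - X ^ a₁)) := by ring
      _ = (1 - X ^ a₂) * (1 - X ^ a₃) *
            ((∑ i ∈ Finset.range c, (X ^ a₂) ^ i) * (∑ j ∈ Finset.range b, (X ^ a₃) ^ j)
              - (∑ i ∈ Finset.Ico e c, (X ^ a₂) ^ i) * (∑ j ∈ Finset.Ico d b, (X ^ a₃) ^ j)) := by
          rw [hfA, hsplit]
      _ = ((1 - X ^ a₂) * ∑ i ∈ Finset.range c, (X ^ a₂) ^ i) *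
            ((1 - X ^ a₃) * ∑ j ∈ Finset.range b, (X ^ a₃) ^ j)
          - ((1 - X ^ a₂) * ∑ i ∈ Finset.Ico e c, (X ^ a₂) ^ i) *
            ((1 - X ^ a₃) * ∑ j ∈ Finset.Ico d b, (X ^ a₃) ^ j) := by ring
      _ = (1 - X ^ (a₂ * c)) * (1 - X ^ (a₃ * b))
          - (X ^ (a₂ * e) - X ^ (a₂ * c)) * (X ^ (a₃ * d) - X ^ (a₃ * b)) := by
          rw [NS3.geom_block, NS3.geom_block, hIco₂, hIco₃]
      _ = 1 - X ^ (a₂ * c) - X ^ (a₃ * b) - X ^ (a₂ * e + a₃ * d)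
            + X ^ (a₂ * c + a₃ * d) + X ^ (a₂ * e + a₃ * b) := by ring
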